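/- The intersection of the zero set Z(ρ) with the diagonal line {(x,x) : x ∈ ℝ} equals {(n,n) : n ∈ ℤ, n ≠ 0}. -/
import Mathlib

open MeasureTheory Real Complex
open scoped ENNReal

noncomputable def mu (t : ℝ) : Measure ℝ :=
  (1/2 : ℝ≥0∞) • (volume.restrict (Set.Icc t (t + 1)))

noncomputable def rho (t : ℝ) : Measure (ℝ × ℝ) :=
  (mu t).prod (Measure.dirac 0) + (Measure.dirac 0).prod (mu t)

noncomputable def rhoHat (t : ℝ) (ξ : ℝ × ℝ) : ℂ :=
  ∫ x, Complex.exp (-2 * (π : ℂ) * Complex.I * ((ξ.1 * x.1 + ξ.2 * x.2 : ℝ) : ℂ)) ∂(rho t)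

noncomputable def sinc (x : ℝ) : ℝ :=
  if x = 0 then 1 else Real.sin (π * x) / (π * x)

instance mu_finite (t : ℝ) : IsFiniteMeasure (mu t) := by
  constructor
  unfold mu
  rw [Measure.smul_apply, Measure.restrict_apply_univ]
  simp [Real.volume_Icc]

lemma norm_f (c : ℝ) : ‖Complex.exp (-2 * (π : ℂ) * Complex.I * (c : ℂ))‖ = 1 := by
  have : -2 * (π : ℂ) * Complex.I * (c : ℂ) = ((-2 * π * c : ℝ) : ℂ) * Complex.I := by
    push_cast; ring
  rw [this]
  exact Complex.norm_exp_ofReal_mul_I _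

lemma rhoHat_diag (t l : ℝ) :
    rhoHat t (l, l) = ∫ x in t..(t+1),
      Complex.exp ((-2 * (π : ℂ) * Complex.I * l) * x) := by
  set f : ℝ × ℝ → ℂ := fun x =>
    Complex.exp (-2 * (π : ℂ) * Complex.I * ((l * x.1 + l * x.2 : ℝ) : ℂ)) with hf
  have hcont : Continuous f := by fun_prop
  have hint : ∀ (ν : Measure (ℝ × ℝ)), IsFiniteMeasure ν → Integrable f ν := by
    intro ν hν
    haveI := hν
    refine (integrable_const (1 : ℝ)).mono' hcont.aestronglyMeasurable ?_
    filter_upwards with x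
    rw [hf]
    exact le_of_eq (norm_f _)
  have h1 : rhoHat t (l, l) = (∫ x, f x ∂((mu t).prod (Measure.dirac 0)))
      + ∫ x, f x ∂((Measure.dirac 0).prod (mu t)) := by
    unfold rhoHat rho
    exact integral_add_measure (hint _ inferInstance) (hint _ inferInstance)
  rw [h1, Measure.prod_dirac, Measure.dirac_prod,
    integral_map (measurable_prodMk_right : Measurable fun x : ℝ => (x, (0:ℝ))).aemeasurable
      hcont.aestronglyMeasurable,
    integral_map (measurable_prodMk_left : Measurable fun x : ℝ => ((0:ℝ), x)).aemeasurable
      hcont.aestronglyMeasurable]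
  have h2 : ∀ x : ℝ, f (x, 0) = Complex.exp ((-2 * (π : ℂ) * Complex.I * l) * x) := by
    intro x; rw [hf]; push_cast; ring_nf
  have h3 : ∀ x : ℝ, f (0, x) = Complex.exp ((-2 * (π : ℂ) * Complex.I * l) * x) := by
    intro x; rw [hf]; push_cast; ring_nf
  simp only [h2, h3]
  unfold mu
  rw [integral_smul_measure]
  have htoReal : ((1/2 : ℝ≥0∞)).toReal = (1/2 : ℝ) := by simp
  rw [htoReal, integral_Icc_eq_integral_Ioc,
    ← intervalIntegral.integral_of_le (by linarith : t ≤ t + 1)]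
  rw [← add_smul]
  norm_num

lemma key (t : ℝ) (x : ℝ) : rhoHat t (x, x) = 0 ↔ ∃ n : ℤ, n ≠ 0 ∧ x = (n : ℝ) := by
  rw [rhoHat_diag]
  by_cases hx : x = 0
  · subst hx
    simp only [Complex.ofReal_zero, mul_zero, zero_mul, Complex.exp_zero]
    rw [intervalIntegral.integral_const]
    constructor
    · intro h
      exfalso
      simp at h
    · rintro ⟨n, hn, h⟩
      exact absurd h.symm (by exact_mod_cast hn)
  · set c : ℂ := -2 * (π : ℂ) * Complex.I * x with hcdef
    have hc : c ≠ 0 := by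
      simp [hcdef, Complex.I_ne_zero, Real.pi_ne_zero, hx, Complex.ofReal_eq_zero]
    have h2pi : (2 * (π : ℂ) * Complex.I) ≠ 0 := by
      simp [Complex.I_ne_zero, Real.pi_ne_zero]
    have h1 : Complex.exp (c * ((t + 1 : ℝ) : ℂ)) = Complex.exp (c * t) * Complex.exp c := by
      rw [← Complex.exp_add]; push_cast; ring_nf
    have hne := Complex.exp_ne_zero (c * t)
    rw [integral_exp_mul_complex hc, div_eq_zero_iff]
    simp only [hc, or_false]
    rw [sub_eq_zero, h1]
    constructor
    · intro h
      have h2 : Complex.exp c = 1 := mul_left_cancel₀ hne (h.trans (mul_one _).symm)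
      rw [Complex.exp_eq_one_iff] at h2
      obtain ⟨n, hn⟩ := h2
      have hxn : (x : ℂ) = ((-n : ℤ) : ℂ) := by
        have := mul_left_cancel₀ h2pi
          (show (2 * (π : ℂ) * Complex.I) * (-x) = (2 * (π : ℂ) * Complex.I) * n by
            linear_combination hn)
        push_cast
        linear_combination -this
      have hxn' : x = ((-n : ℤ) : ℝ) := by exact_mod_cast hxn
      refine ⟨-n, ?_, hxn'⟩
      intro h0
      apply hx
      rw [hxn', h0]
      simp
    · rintro ⟨n, hn, rfl⟩
      have : c = ((-n : ℤ) : ℂ) * (2 * (π : ℂ) * Complex.I) := by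
        rw [hcdef]; push_cast; ring
      rw [this, Complex.exp_int_mul_two_pi_mul_I, mul_one]

theorem stmt3 (t : ℝ) :
    {lam : ℝ × ℝ | rhoHat t lam = 0} ∩ {p : ℝ × ℝ | p.1 = p.2}
      = {p : ℝ × ℝ | ∃ n : ℤ, n ≠ 0 ∧ p = ((n : ℝ), (n : ℝ))} := by
  ext ⟨x, y⟩
  simp only [Set.mem_inter_iff, Set.mem_setOf_eq, Prod.mk.injEq]
  constructor
  · rintro ⟨h0, h1⟩
    subst h1
    obtain ⟨n, hn, hx⟩ := (key t x).1 h0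
    exact ⟨n, hn, hx, hx⟩
  · rintro ⟨n, hn, rfl, rfl⟩
    exact ⟨(key t _).2 ⟨n, hn, rfl⟩, rfl⟩
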